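/- arXiv:1408.5682 — 2 statements merged into one kernel-verified Lean document; each statement's English description precedes it below -/
import Mathlib

section
/- Let (μ_n)_{n≥1} be a sequence of probability measures on ℝ, each having finite moments up to order 4, such that for every n the first moment of μ_n is 0 and the second moment of μ_n is 1. If the fourth moment of μ_n converges to 1 as n → ∞, then μ_n converges weakly to the centered Bernoulli distribution (1/2)δ_{-1} + (1/2)δ_{1}. -/
open MeasureTheory Filter
open scoped ENNReal Topology

noncomputable section

/-- The distance `k`-graph of a graph: same vertices, edges between vertices at distance `k`. -/
def distGraph {W : Type*} (H : SimpleGraph W) (k : ℕ) : SimpleGraph W where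
  Adj x y := x ≠ y ∧ H.dist x y = k
  symm := ⟨fun x y h => ⟨h.1.symm, by rw [SimpleGraph.dist_comm]; exact h.2⟩⟩
  loopless := ⟨fun x h => h.1 rfl⟩

/-- Vertex set of the `N`-fold star power of a graph rooted at `e`:
the common root `none`, plus `N` copies of the non-root vertices. -/
abbrev StarVert (V : Type*) (e : V) (N : ℕ) := Option (Fin N × {v : V // v ≠ e})

def starAdj {V : Type*} (G : SimpleGraph V) (e : V) (N : ℕ) :
    StarVert V e N → StarVert V e N → Prop
  | none, none => False
  | none, some q => G.Adj e q.2.1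
  | some p, none => G.Adj p.2.1 e
  | some p, some q => p.1 = q.1 ∧ G.Adj p.2.1 q.2.1

/-- The `N`-fold star power of a rooted graph `(G, e)`: `N` copies of `G` glued at `e`. -/
def starPower {V : Type*} (G : SimpleGraph V) (e : V) (N : ℕ) :
    SimpleGraph (StarVert V e N) where
  Adj := starAdj G e N
  symm := by
    refine ⟨?_⟩
    rintro (_ | p) (_ | q) h
    · exact h.elim
    · exact h.symm
    · exact h.symm
    · exact ⟨h.1.symm, h.2.symm⟩
  loopless := by
    refine ⟨?_⟩
    rintro (_ | p) h
    · exact h.elim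
    · exact G.loopless.irrefl _ h.2

/-- The vertex of the `i`-th copy of `G` in the `N`-fold star power corresponding to `v ∈ G`. -/
def rootedEmbed {V : Type*} [DecidableEq V] (e : V) (N : ℕ) (i : Fin N) (v : V) :
    StarVert V e N :=
  if h : v = e then none else some (i, ⟨v, h⟩)

open scoped Classical in
/-- The real adjacency matrix of a graph. -/
def adjMat {W : Type*} [Fintype W] (H : SimpleGraph W) : Matrix W W ℝ :=
  fun x y => if H.Adj x y then 1 else 0

/-- The centered Bernoulli distribution `(1/2)δ_{-1} + (1/2)δ_1`. -/
def bern : Measure ℝ := (1/2 : ℝ≥0∞) • Measure.dirac (-1) + (1/2 : ℝ≥0∞) • Measure.dirac 1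

/-- The Cauchy transform of a measure on `ℝ`. -/
def cauchyT (μ : Measure ℝ) (z : ℂ) : ℂ := ∫ x, (z - (x : ℂ))⁻¹ ∂μ

/-- The distance `d(μ₁,μ₂) = sup_{Im z ≥ 1} |G_{μ₁}(z) - G_{μ₂}(z)|`. -/
def cdist (μ₁ μ₂ : Measure ℝ) : ℝ :=
  ⨆ z : {z : ℂ // 1 ≤ z.im}, ‖cauchyT μ₁ z - cauchyT μ₂ z‖


lemma sq_sub_one_sq_integral (ν : Measure ℝ) [IsProbabilityMeasure ν]
    (hint : ∀ m ≤ 4, Integrable (fun x : ℝ => x ^ m) ν)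
    (h2 : ∫ x, x ^ 2 ∂ν = 1) :
    ∫ x, (x ^ 2 - 1) ^ 2 ∂ν = (∫ x, x ^ 4 ∂ν) - 1 := by
  have h4 : Integrable (fun x : ℝ => x ^ 4) ν := hint 4 le_rfl
  have h2' : Integrable (fun x : ℝ => x ^ 2) ν := hint 2 (by norm_num)
  have e1 : Integrable (fun x : ℝ => 2 * x ^ 2 - 1) ν := by
    exact (h2'.const_mul 2).sub (integrable_const (1:ℝ))
  have he : ∫ x, (x ^ 2 - 1) ^ 2 ∂ν = ∫ x, (x ^ 4 - (2 * x ^ 2 - 1)) ∂ν := by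
    congr 1; funext x; ring
  have e2 : ∫ x, (2 * x ^ 2 - 1) ∂ν = 1 := by
    have h := integral_sub (h2'.const_mul 2) (integrable_const (1:ℝ))
    rw [h, integral_const_mul, h2, integral_const]
    simp only [probReal_univ, ENNReal.toReal_one, smul_eq_mul, mul_one]
    norm_num
  rw [he, integral_sub h4 e1, e2]

lemma bern_integral (f : BoundedContinuousFunction ℝ ℝ) :
    ∫ x, f x ∂bern = (f (-1) + f 1) / 2 := by
  have hi : ∀ c : ℝ, Integrable (fun x => f x) ((1/2 : ℝ≥0∞) • Measure.dirac c) := by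
    intro c
    exact (f.integrable (Measure.dirac c)).smul_measure (by norm_num)
  rw [bern, integral_add_measure (hi _) (hi _), integral_smul_measure, integral_smul_measure,
      integral_dirac, integral_dirac]
  norm_num
  ring

set_option maxHeartbeats 1000000 in
/-- Fourth moment lemma: if `m₁(μₙ) = 0`, `m₂(μₙ) = 1` and `m₄(μₙ) → 1`,
then `μₙ` converges weakly to the centered Bernoulli distribution. -/
theorem fourth_moment_lemma_bernoulli
    (μ : ℕ → Measure ℝ)
    (hprob : ∀ n, IsProbabilityMeasure (μ n))
    (hint : ∀ n, ∀ m ≤ 4, Integrable (fun x : ℝ => x ^ m) (μ n))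
    (h1 : ∀ n, ∫ x, x ∂(μ n) = 0)
    (h2 : ∀ n, ∫ x, x ^ 2 ∂(μ n) = 1)
    (h4 : Tendsto (fun n => ∫ x, x ^ 4 ∂(μ n)) atTop (𝓝 1)) :
    ∀ f : BoundedContinuousFunction ℝ ℝ,
      Tendsto (fun n => ∫ x, f x ∂(μ n)) atTop (𝓝 (∫ x, f x ∂bern)) := by
  intro f
  rw [bern_integral f]
  obtain ⟨a, ha⟩ : ∃ a : ℝ, a = (f (-1) + f 1) / 2 := ⟨_, rfl⟩
  obtain ⟨b, hb⟩ : ∃ b : ℝ, b = (f 1 - f (-1)) / 2 := ⟨_, rfl⟩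
  rw [← ha]
  obtain ⟨g, hgdef⟩ : ∃ g : ℝ → ℝ, g = fun x => f x - a - b * x := ⟨_, rfl⟩
  have hgx' : ∀ x, g x = f x - a - b * x := fun x => by rw [hgdef]
  have hg1 : g 1 = 0 := by rw [hgx', ha, hb]; ring
  have hgm1 : g (-1) = 0 := by rw [hgx', ha, hb]; ring
  have hgc : Continuous g := by
    rw [hgdef]
    exact (f.continuous.sub continuous_const).sub (continuous_const.mul continuous_id)
  rw [Metric.tendsto_atTop]
  intro ε hε
  obtain ⟨δ₁, hδ₁pos, hδ₁⟩ := Metric.continuousAt_iff.mp (hgc.continuousAt (x := 1))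
    (ε/2) (half_pos hε)
  obtain ⟨δ₂, hδ₂pos, hδ₂⟩ := Metric.continuousAt_iff.mp (hgc.continuousAt (x := -1))
    (ε/2) (half_pos hε)
  obtain ⟨δ, hδdef⟩ : ∃ δ : ℝ, δ = min (min δ₁ δ₂) 1 := ⟨_, rfl⟩
  have hδpos : 0 < δ := hδdef ▸ lt_min (lt_min hδ₁pos hδ₂pos) one_pos
  have hδ1 : δ ≤ 1 := hδdef ▸ min_le_right _ _
  have hδle1 : δ ≤ δ₁ := hδdef ▸ le_trans (min_le_left _ _) (min_le_left _ _)
  have hδle2 : δ ≤ δ₂ := hδdef ▸ le_trans (min_le_left _ _) (min_le_right _ _)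
  have hδ4pos : (0:ℝ) < δ ^ 4 := by positivity
  obtain ⟨M, hM⟩ : ∃ M : ℝ, M = ‖f‖ + |a| + |b| / 2 := ⟨_, rfl⟩
  have hM0 : 0 ≤ M := by
    have h1 := norm_nonneg f
    have h2 := abs_nonneg a
    have h3 := abs_nonneg b
    rw [hM]; linarith
  obtain ⟨C, hC⟩ : ∃ C : ℝ, C = M / δ ^ 4 + 2 * |b| / δ ^ 4 := ⟨_, rfl⟩
  have hC0 : 0 ≤ C := by rw [hC]; positivity
  -- key pointwise bound
  have key : ∀ x : ℝ, |g x| ≤ ε/2 + C * (x ^ 2 - 1) ^ 2 := by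
    intro x
    have hsq : 0 ≤ C * (x ^ 2 - 1) ^ 2 := mul_nonneg hC0 (sq_nonneg _)
    rcases lt_or_ge (dist x 1) δ with hnear | hfar1
    · have h := hδ₁ (lt_of_lt_of_le hnear hδle1)
      rw [hg1] at h
      have h' : |g x| < ε/2 := by simpa [Real.dist_eq] using h
      linarith
    rcases lt_or_ge (dist x (-1)) δ with hnear | hfar2
    · have h := hδ₂ (lt_of_lt_of_le hnear hδle2)
      rw [hgm1] at h
      have h' : |g x| < ε/2 := by simpa [Real.dist_eq] using h
      linarith
    · rw [Real.dist_eq] at hfar1 hfar2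
      have hs1 : δ ^ 2 ≤ (x - 1) ^ 2 := by
        calc δ ^ 2 ≤ |x - 1| ^ 2 := pow_le_pow_left₀ hδpos.le hfar1 2
        _ = (x - 1) ^ 2 := sq_abs _
      have hs2 : δ ^ 2 ≤ (x + 1) ^ 2 := by
        have h : x - -1 = x + 1 := by ring
        rw [h] at hfar2
        calc δ ^ 2 ≤ |x + 1| ^ 2 := pow_le_pow_left₀ hδpos.le hfar2 2
        _ = (x + 1) ^ 2 := sq_abs _
      have hd4 : δ ^ 4 ≤ (x ^ 2 - 1) ^ 2 := by nlinarith [sq_nonneg δ]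
      have hδ4le1 : δ ^ 4 ≤ 1 := pow_le_one₀ hδpos.le hδ1
      have hd4' : δ ^ 4 * x ^ 2 ≤ 4 * (x ^ 2 - 1) ^ 2 := by
        rcases le_or_gt (x ^ 2) 4 with hx4 | hx4
        · nlinarith
        · have hx2pos : (0:ℝ) < x ^ 2 := lt_trans (by norm_num) hx4
          nlinarith [mul_le_mul_of_nonneg_right hδ4le1 (sq_nonneg x),
            mul_lt_mul_of_pos_right hx4 hx2pos]
      have hfx : |f x| ≤ ‖f‖ := by
        rw [← Real.norm_eq_abs]; exact f.norm_coe_le_norm x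
      have habsx : |x| ≤ (x ^ 2 + 1) / 2 := by nlinarith [sq_nonneg (|x| - 1), sq_abs x]
      have hgx : |g x| ≤ M + (|b| / 2) * x ^ 2 := by
        have t1 : |g x| ≤ |f x - a| + |b * x| := by
          rw [hgx']
          exact abs_sub (f x - a) (b * x)
        have t2 : |f x - a| ≤ |f x| + |a| := abs_sub _ _
        have t3 : |b * x| = |b| * |x| := abs_mul _ _
        have t4 : |b| * |x| ≤ |b| * ((x ^ 2 + 1) / 2) :=
          mul_le_mul_of_nonneg_left habsx (abs_nonneg b)
        rw [hM]
        nlinarith [abs_nonneg b]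
      have hMb : M + (|b| / 2) * x ^ 2 ≤ C * (x ^ 2 - 1) ^ 2 := by
        have e1 : M ≤ M / δ ^ 4 * (x ^ 2 - 1) ^ 2 := by
          rw [show M / δ ^ 4 * (x ^ 2 - 1) ^ 2 = M * (x ^ 2 - 1) ^ 2 / δ ^ 4 from by ring,
            le_div_iff₀ hδ4pos]
          nlinarith
        have e2 : (|b| / 2) * x ^ 2 ≤ 2 * |b| / δ ^ 4 * (x ^ 2 - 1) ^ 2 := by
          rw [show 2 * |b| / δ ^ 4 * (x ^ 2 - 1) ^ 2
              = 2 * |b| * (x ^ 2 - 1) ^ 2 / δ ^ 4 from by ring, le_div_iff₀ hδ4pos]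
          nlinarith [abs_nonneg b]
        rw [hC]
        nlinarith
      linarith
  -- bound on the integral difference
  have hbound : ∀ n, |(∫ x, f x ∂(μ n)) - a| ≤ ε/2 + C * ((∫ x, x ^ 4 ∂(μ n)) - 1) := by
    intro n
    haveI := hprob n
    have intf : Integrable (fun x => f x) (μ n) := f.integrable (μ n)
    have intx : Integrable (fun x : ℝ => x) (μ n) := by
      simpa using hint n 1 (by norm_num)
    have intq : Integrable (fun x : ℝ => (x ^ 2 - 1) ^ 2) (μ n) := by
      have h : (fun x : ℝ => (x ^ 2 - 1) ^ 2) = fun x : ℝ => x ^ 4 - 2 * x ^ 2 + 1 := by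
        funext x; ring
      rw [h]
      exact ((hint n 4 le_rfl).sub ((hint n 2 (by norm_num)).const_mul 2)).add
        (integrable_const (1:ℝ))
    have intg : Integrable g (μ n) := by
      rw [hgdef]
      exact (intf.sub (integrable_const a)).sub (intx.const_mul b)
    have intRHS : Integrable (fun x : ℝ => ε/2 + C * (x ^ 2 - 1) ^ 2) (μ n) :=
      (integrable_const _).add (intq.const_mul C)
    have hgint : ∫ x, g x ∂(μ n) = (∫ x, f x ∂(μ n)) - a := by
      have e1 : ∫ x, (f x - a - b * x) ∂(μ n)
          = ∫ x, (f x - a) ∂(μ n) - ∫ x, b * x ∂(μ n) :=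
        integral_sub (intf.sub (integrable_const a)) (intx.const_mul b)
      have e2 : ∫ x, (f x - a) ∂(μ n) = (∫ x, f x ∂(μ n)) - a := by
        rw [integral_sub intf (integrable_const a), integral_const]
        simp
      have e3 : ∫ x, b * x ∂(μ n) = 0 := by
        rw [integral_const_mul, h1 n, mul_zero]
      rw [hgdef, e1, e2, e3, sub_zero]
    calc |(∫ x, f x ∂(μ n)) - a| = |∫ x, g x ∂(μ n)| := by rw [hgint]
      _ ≤ ∫ x, |g x| ∂(μ n) := by
          simpa [Real.norm_eq_abs] using norm_integral_le_integral_norm (μ := μ n) g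
      _ ≤ ∫ x, (ε/2 + C * (x ^ 2 - 1) ^ 2) ∂(μ n) := integral_mono intg.abs intRHS key
      _ = ε/2 + C * ((∫ x, x ^ 4 ∂(μ n)) - 1) := by
          rw [integral_add (integrable_const _) (intq.const_mul C), integral_const,
            integral_const_mul, sq_sub_one_sq_integral (μ n) (hint n) (h2 n)]
          simp
  -- conclude
  have hCε : C * (ε / (4 * (C + 1))) ≤ ε / 4 := by
    rw [mul_div_assoc']
    rw [div_le_div_iff₀ (by positivity) (by norm_num)]
    nlinarith
  obtain ⟨N, hN⟩ := (Metric.tendsto_atTop.mp h4) (ε / (4 * (C + 1))) (by positivity)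
  refine ⟨N, fun n hn => ?_⟩
  have hd := hN n hn
  rw [Real.dist_eq] at hd ⊢
  have ha1 : C * ((∫ x, x ^ 4 ∂(μ n)) - 1) ≤ C * |(∫ x, x ^ 4 ∂(μ n)) - 1| :=
    mul_le_mul_of_nonneg_left (le_abs_self _) hC0
  have ha2 : C * |(∫ x, x ^ 4 ∂(μ n)) - 1| ≤ C * (ε / (4 * (C + 1))) :=
    mul_le_mul_of_nonneg_left hd.le hC0
  have hb1 := hbound n
  linarith


end
end

section
/- Let μ be a probability measure on ℝ with finite moments up to order 4, m₁(μ) = 0, m₂(μ) = 1, and m₄(μ) − 1 ≤ 1/16. Write the Cauchy transform of μ in continued-fraction form as G_μ(z) = 1/(z − 1/(z − f(z))) with f(z) = β₁ + γ₁·G_ν(z) for some probability measure ν, where β₁, γ₁ are the Jacobi parameters of μ. Then for every z with Im(z) ≥ 1: |f(z)| ≤ 2√(m₄(μ) − 1) ≤ 1/2, |1/(z² − 1)| ≤ 1, and |1/(z² − 1 − f(z)·z)| ≤ 2. -/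
open MeasureTheory Filter
open scoped ENNReal Topology

noncomputable section

lemma cauchyT_abs_le (κ : Measure ℝ) [IsProbabilityMeasure κ] (z : ℂ) (hz : 1 ≤ z.im) :
    ‖cauchyT κ z‖ ≤ 1 := by
  have hb : ∀ x : ℝ, ‖(z - (x : ℂ))⁻¹‖ ≤ 1 := by
    intro x
    rw [norm_inv]
    have h1 : (1 : ℝ) ≤ ‖z - (x : ℂ)‖ := by
      calc (1 : ℝ) ≤ z.im := hz
        _ = (z - (x : ℂ)).im := by simp
        _ ≤ |(z - (x : ℂ)).im| := le_abs_self _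
        _ ≤ ‖z - (x : ℂ)‖ := Complex.abs_im_le_norm _
    exact inv_le_one_of_one_le₀ h1
  have := MeasureTheory.norm_integral_le_of_norm_le_const (μ := κ)
    (f := fun x : ℝ => (z - (x : ℂ))⁻¹) (C := 1) (Filter.Eventually.of_forall hb)
  simpa [cauchyT] using this

/-- Bounds used in the quantitative fourth moment estimate: writing
`G_μ(z) = 1/(z − 1/(z − f(z)))` with `f(z) = β₁ + γ₁·G_ν(z)`, where `β₁ = m₃(μ)` and
`γ₁ = m₄(μ) − 1 − m₃(μ)²` are the Jacobi parameters, one has for `Im z ≥ 1`: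
`|f(z)| ≤ 2√(m₄ − 1) ≤ 1/2`, `|1/(z² − 1)| ≤ 1` and `|1/(z² − 1 − f(z)z)| ≤ 2`. -/
theorem continued_fraction_tail_bounds
    (μ ν : Measure ℝ) [IsProbabilityMeasure μ] [IsProbabilityMeasure ν]
    (hint : ∀ m ≤ 4, Integrable (fun x : ℝ => x ^ m) μ)
    (h1 : ∫ x, x ∂μ = 0) (h2 : ∫ x, x ^ 2 ∂μ = 1)
    (h4 : (∫ x, x ^ 4 ∂μ) - 1 ≤ 1 / 16)
    (f : ℂ → ℂ)
    (hf : ∀ z : ℂ, 1 ≤ z.im →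
      f z = (Complex.ofReal (∫ x, x ^ 3 ∂μ)) +
        (Complex.ofReal ((∫ x, x ^ 4 ∂μ) - 1 - (∫ x, x ^ 3 ∂μ) ^ 2)) * cauchyT ν z)
    (hG : ∀ z : ℂ, 1 ≤ z.im → cauchyT μ z = (z - (z - f z)⁻¹)⁻¹) :
    ∀ z : ℂ, 1 ≤ z.im →
      ‖f z‖ ≤ 2 * Real.sqrt ((∫ x, x ^ 4 ∂μ) - 1) ∧
      2 * Real.sqrt ((∫ x, x ^ 4 ∂μ) - 1) ≤ 1 / 2 ∧
      ‖(z ^ 2 - 1)⁻¹‖ ≤ 1 ∧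
      ‖(z ^ 2 - 1 - f z * z)⁻¹‖ ≤ 2 := by
  have i4 := hint 4 le_rfl
  have i3 := hint 3 (by norm_num)
  have i2 := hint 2 (by norm_num)
  have i1 : Integrable (fun x : ℝ => x) μ := by simpa using hint 1 (by norm_num)
  have i0 : Integrable (fun _ : ℝ => (1 : ℝ)) μ := integrable_const 1
  set m3 := ∫ x, x ^ 3 ∂μ with hm3def
  set m4 := ∫ x, x ^ 4 ∂μ with hm4def
  have combo : ∀ a b c d e : ℝ,
      ∫ x, (a * x ^ 4 + b * x ^ 3 + c * x ^ 2 + d * x + e) ∂μ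
        = a * m4 + b * m3 + c * (∫ x, x ^ 2 ∂μ) + d * (∫ x, x ∂μ) + e := by
    intro a b c d e
    have ia : Integrable (fun x : ℝ => a * x ^ 4) μ := i4.const_mul a
    have ib : Integrable (fun x : ℝ => b * x ^ 3) μ := i3.const_mul b
    have ic : Integrable (fun x : ℝ => c * x ^ 2) μ := i2.const_mul c
    have id' : Integrable (fun x : ℝ => d * x) μ := i1.const_mul d
    have iab : Integrable (fun x : ℝ => a * x ^ 4 + b * x ^ 3) μ := ia.add ib
    have iabc : Integrable (fun x : ℝ => a * x ^ 4 + b * x ^ 3 + c * x ^ 2) μ := iab.add ic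
    have iabcd : Integrable (fun x : ℝ => a * x ^ 4 + b * x ^ 3 + c * x ^ 2 + d * x) μ :=
      iabc.add id'
    rw [integral_add iabcd (integrable_const e), integral_add iabc id', integral_add iab ic,
      integral_add ia ib,
      integral_const_mul, integral_const_mul, integral_const_mul, integral_const_mul,
      integral_const]
    simp [measure_univ]
    rfl
  have key : m4 - 1 - m3 ^ 2 = ∫ x, (m3 * x - x ^ 2 + 1) ^ 2 ∂μ := by
    have e1 : (fun x : ℝ => (m3 * x - x ^ 2 + 1) ^ 2)
        = fun x => 1 * x ^ 4 + (-(2 * m3)) * x ^ 3 + (m3 ^ 2 - 2) * x ^ 2 + (2 * m3) * x + 1 := by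
      ext x; ring
    rw [e1, combo, h1, h2]; ring
  have keynn : 0 ≤ m4 - 1 - m3 ^ 2 := key ▸ integral_nonneg fun x => sq_nonneg _
  have hs : 0 ≤ m4 - 1 := by nlinarith [sq_nonneg m3]
  set r := Real.sqrt (m4 - 1) with hrdef
  have hrnn : 0 ≤ r := Real.sqrt_nonneg _
  have hrr : r * r = m4 - 1 := Real.mul_self_sqrt hs
  have hr4 : r ≤ 1 / 4 := by
    have := Real.sqrt_le_sqrt h4
    calc r ≤ Real.sqrt (1 / 16) := this
      _ = 1 / 4 := by
        rw [show (1 / 16 : ℝ) = (1 / 4) ^ 2 by norm_num, Real.sqrt_sq (by norm_num)]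
  have hm3r : |m3| ≤ r := by
    have := Real.sqrt_le_sqrt (show m3 ^ 2 ≤ m4 - 1 by linarith)
    rwa [Real.sqrt_sq_eq_abs] at this
  intro z hz
  have hGν := cauchyT_abs_le ν z hz
  have hGμ := cauchyT_abs_le μ z hz
  -- bound on |f z|
  have hfz : ‖f z‖ ≤ 2 * r := by
    have habs : ‖f z‖
        ≤ |m3| + |m4 - 1 - m3 ^ 2| * ‖cauchyT ν z‖ := by
      rw [hf z hz]
      have h := norm_add_le ((m3 : ℂ)) ((((m4 - 1 - m3 ^ 2 : ℝ) : ℂ)) * cauchyT ν z)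
      simp only [norm_mul, Complex.norm_real, Real.norm_eq_abs] at h
      exact h
    have habs2 : |m4 - 1 - m3 ^ 2| = m4 - 1 - m3 ^ 2 := abs_of_nonneg keynn
    have hGν' : ‖cauchyT ν z‖ ≤ 1 := hGν
    have hGnn : 0 ≤ ‖cauchyT ν z‖ := norm_nonneg _
    nlinarith [sq_nonneg m3]
  have h2r : 2 * r ≤ 1 / 2 := by linarith
  refine ⟨hfz, h2r, ?_, ?_⟩
  · -- |1/(z^2-1)| ≤ 1
    have hfac : z ^ 2 - 1 = (z - 1) * (z + 1) := by ring
    have hb1 : (1 : ℝ) ≤ ‖z - 1‖ := by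
      calc (1 : ℝ) ≤ z.im := hz
        _ = (z - 1).im := by simp
        _ ≤ |(z - 1).im| := le_abs_self _
        _ ≤ ‖z - 1‖ := Complex.abs_im_le_norm _
    have hb2 : (1 : ℝ) ≤ ‖z + 1‖ := by
      calc (1 : ℝ) ≤ z.im := hz
        _ = (z + 1).im := by simp
        _ ≤ |(z + 1).im| := le_abs_self _
        _ ≤ ‖z + 1‖ := Complex.abs_im_le_norm _
    rw [hfac, norm_inv, norm_mul]
    exact inv_le_one_of_one_le₀ (one_le_mul_of_one_le_of_one_le hb1 hb2)
  · -- |1/(z^2-1-f z * z)| ≤ 2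
    have hz1 : (1 : ℝ) ≤ ‖z‖ := by
      calc (1 : ℝ) ≤ z.im := hz
        _ ≤ |z.im| := le_abs_self _
        _ ≤ ‖z‖ := Complex.abs_im_le_norm _
    have hzf : (1 / 2 : ℝ) ≤ ‖z - f z‖ := by
      have htri : ‖z‖ - ‖f z‖ ≤ ‖z - f z‖ := by
        exact norm_sub_norm_le z (f z)
      linarith
    have hzfne : z - f z ≠ 0 := by
      intro h
      rw [h] at hzf
      simp at hzf
      linarith
    have hid : z ^ 2 - 1 - f z * z = (z - f z) * (z - (z - f z)⁻¹) := by
      field_simp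
      ring
    rw [hid, mul_inv, norm_mul, ← hG z hz]
    have h1 : ‖(z - f z)⁻¹‖ ≤ 2 := by
      rw [norm_inv]
      rw [inv_le_comm₀ (by linarith) (by norm_num)]
      linarith
    calc ‖(z - f z)⁻¹‖ * ‖cauchyT μ z‖
        ≤ 2 * 1 := by
          exact mul_le_mul h1 hGμ (norm_nonneg _) (by norm_num)
      _ = 2 := by norm_num

end
end
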